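/- Let 𝒩₁ := cone 𝒱 + ℝ₊(0_{X*},1) ⊆ X*×ℝ. (1) If 𝒱 is a convex subset of X*×ℝ, then 𝒩₁ is convex. (2) If 𝒱 is compact in X*×ℝ (weak*-topology on X* times the usual topology on ℝ) and for every v = (v¹,v²) ∈ 𝒱 there exists x̄ ∈ X with ⟨v¹, x̄⟩ < v², then 𝒩₁ is closed. -/

import Mathlib

open Pointwise

/-- The cone generated by a set `A`: `cone A = {λa : λ ≥ 0, a ∈ A}`. -/
def coneSet {E : Type*} [SMul ℝ E] (A : Set E) : Set E :=
  {p | ∃ l : ℝ, 0 ≤ l ∧ ∃ a ∈ A, p = l • a}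

lemma convex_coneSet {E : Type*} [AddCommGroup E] [Module ℝ E] {A : Set E}
    (hA : Convex ℝ A) : Convex ℝ (coneSet A) := by
  rintro p ⟨l, hl, u, hu, rfl⟩ q ⟨m, hm, w, hw, rfl⟩ a b ha hb hab
  rcases eq_or_lt_of_le (by positivity : (0:ℝ) ≤ a * l + b * m) with hs | hs
  · have h1 : a * l = 0 := by nlinarith [mul_nonneg ha hl, mul_nonneg hb hm]
    have h2 : b * m = 0 := by nlinarith [mul_nonneg ha hl, mul_nonneg hb hm]
    refine ⟨0, le_refl _, u, hu, ?_⟩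
    rw [smul_smul, smul_smul, h1, h2]
    simp
  · set s := a * l + b * m with hsdef
    have hs' : s ≠ 0 := ne_of_gt hs
    refine ⟨s, le_of_lt hs, (a * l / s) • u + (b * m / s) • w,
      hA hu hw (by positivity) (by positivity) (by field_simp; exact hsdef.symm), ?_⟩
    rw [smul_add, smul_smul, smul_smul, smul_smul, smul_smul]
    rw [mul_div_cancel₀ _ hs', mul_div_cancel₀ _ hs']

/-- Propositions 4.1(i) and 4.2(i): (1) if 𝒱 is convex, then 𝒩₁ = cone 𝒱 + ℝ₊(0,1) is
convex; (2) if 𝒱 is compact and the Slater-type condition holds (for every v ∈ 𝒱 there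
is x̄ with ⟨v¹,x̄⟩ < v²), then 𝒩₁ is closed. -/
theorem stmt18
    {X : Type*} [AddCommGroup X] [Module ℝ X] [TopologicalSpace X]
    [IsTopologicalAddGroup X] [ContinuousSMul ℝ X] [LocallyConvexSpace ℝ X] [T2Space X]
    {T : Type*} [Nonempty T]
    (U : T → Set (WeakDual ℝ X × ℝ)) (hU : ∀ t, (U t).Nonempty) :
    (Convex ℝ (⋃ t, U t) →
      Convex ℝ (coneSet (⋃ t, U t) + {p : WeakDual ℝ X × ℝ | p.1 = 0 ∧ 0 ≤ p.2})) ∧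
    (IsCompact (⋃ t, U t) →
      (∀ v ∈ ⋃ t, U t, ∃ x : X, v.1 x < v.2) →
      IsClosed (coneSet (⋃ t, U t) + {p : WeakDual ℝ X × ℝ | p.1 = 0 ∧ 0 ≤ p.2})) := by
  set V : Set (WeakDual ℝ X × ℝ) := ⋃ t, U t with hVdef
  set S : Set (WeakDual ℝ X × ℝ) := {p : WeakDual ℝ X × ℝ | p.1 = 0 ∧ 0 ≤ p.2} with hSdef
  have hSconv : Convex ℝ S := by
    rintro ⟨p1, p2⟩ ⟨hp1, hp2⟩ ⟨q1, q2⟩ ⟨hq1, hq2⟩ a b ha hb hab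
    constructor
    · show a • p1 + b • q1 = 0
      simp only at hp1 hq1
      rw [hp1, hq1, smul_zero, smul_zero, add_zero]
    · show 0 ≤ a • p2 + b • q2
      exact add_nonneg (smul_nonneg ha hp2) (smul_nonneg hb hq2)
  constructor
  · intro hVconv
    exact (convex_coneSet hVconv).add hSconv
  · intro hcomp hslater
    set Φ : ℝ × ((WeakDual ℝ X × ℝ) × ℝ) → WeakDual ℝ X × ℝ :=
      fun q => q.1 • q.2.1 + ((0 : WeakDual ℝ X), q.2.2) with hΦdef
    set D : Set (ℝ × ((WeakDual ℝ X × ℝ) × ℝ)) :=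
      {q | 0 ≤ q.1 ∧ q.2.1 ∈ V ∧ 0 ≤ q.2.2} with hDdef
    have hN : coneSet V + S = Φ '' D := by
      ext p
      constructor
      · rintro ⟨x, ⟨l, hl, v, hv, rfl⟩, y, ⟨hy1, hy2⟩, rfl⟩
        refine ⟨(l, (v, y.2)), ⟨hl, hv, hy2⟩, ?_⟩
        simp only [hΦdef]
        congr 1
        exact Prod.ext hy1.symm rfl
      · rintro ⟨⟨l, v, m⟩, ⟨hl, hv, hm⟩, rfl⟩
        exact ⟨l • v, ⟨l, hl, v, hv, rfl⟩, ((0 : WeakDual ℝ X), m), ⟨rfl, hm⟩, rfl⟩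
    rw [show coneSet V + S = Φ '' D from hN]
    apply isClosed_of_closure_subset
    intro p hp
    have hL : Filter.NeBot (Filter.comap Φ (nhds p) ⊓ Filter.principal D) := by
      rw [Filter.inf_principal_neBot_iff]
      intro W hW
      rcases hW with ⟨A, hA, hAW⟩
      rcases (mem_closure_iff_nhds.mp hp A hA) with ⟨z, hzA, q, hqD, hqz⟩
      exact ⟨q, hAW (by simp [Set.mem_preimage, hqz, hzA]), hqD⟩
    obtain ⟨G, hG⟩ := Filter.exists_ultrafilter_le (Filter.comap Φ (nhds p) ⊓ Filter.principal D)
    have hGΦ : Filter.Tendsto Φ G (nhds p) := by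
      rw [Filter.tendsto_iff_comap]
      exact hG.trans inf_le_left
    have hGD : ∀ᶠ q in (G : Filter (ℝ × ((WeakDual ℝ X × ℝ) × ℝ))), q ∈ D :=
      (hG.trans inf_le_right) (Filter.mem_principal_self D)
    have hVmem : V ∈ G.map (fun q : ℝ × ((WeakDual ℝ X × ℝ) × ℝ) => q.2.1) :=
      Filter.mem_map.mpr (hGD.mono fun q hq => hq.2.1)
    obtain ⟨vb, hvb, hvbt⟩ := hcomp.ultrafilter_le_nhds (G.map (fun q => q.2.1))
      (Filter.le_principal_iff.mpr hVmem)
    have hvt : Filter.Tendsto (fun q : ℝ × ((WeakDual ℝ X × ℝ) × ℝ) => q.2.1) G (nhds vb) := hvbt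
    obtain ⟨xb, hxb⟩ := hslater vb hvb
    set φ : WeakDual ℝ X × ℝ → ℝ := fun w => w.2 - w.1 xb with hφdef
    have hφcont : Continuous φ :=
      continuous_snd.sub ((WeakDual.eval_continuous xb).comp continuous_fst)
    have hc : 0 < φ vb := sub_pos.mpr hxb
    set c : ℝ := φ vb with hcdef
    have hφΦ : ∀ q : ℝ × ((WeakDual ℝ X × ℝ) × ℝ), φ (Φ q) = q.1 * φ q.2.1 + q.2.2 := by
      intro ⟨l, v, m⟩
      show (l * v.2 + m) - (l * (v.1 xb) + 0) = l * (v.2 - v.1 xb) + m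
      ring
    have hφp : Filter.Tendsto (fun q => φ (Φ q)) G (nhds (φ p)) :=
      (hφcont.tendsto p).comp hGΦ
    have hφv : Filter.Tendsto (fun q : ℝ × ((WeakDual ℝ X × ℝ) × ℝ) => φ q.2.1) G (nhds c) :=
      (hφcont.tendsto vb).comp hvt
    set M : ℝ := max 0 ((φ p + 1) / (c / 2)) with hMdef
    have hbound : ∀ᶠ q in (G : Filter (ℝ × ((WeakDual ℝ X × ℝ) × ℝ))),
        q.1 ∈ Set.Icc (0:ℝ) M := by
      have h1 : ∀ᶠ q in (G : Filter (ℝ × ((WeakDual ℝ X × ℝ) × ℝ))), c / 2 < φ q.2.1 :=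
        hφv (Ioi_mem_nhds (by linarith))
      have h2 : ∀ᶠ q in (G : Filter (ℝ × ((WeakDual ℝ X × ℝ) × ℝ))), φ (Φ q) < φ p + 1 :=
        hφp (Iio_mem_nhds (by linarith))
      filter_upwards [h1, h2, hGD] with q hq1 hq2 hqD
      refine ⟨hqD.1, ?_⟩
      have hq2' : q.1 * φ q.2.1 + q.2.2 < φ p + 1 := by rw [← hφΦ]; exact hq2
      have hA : q.1 * (c / 2) ≤ q.1 * φ q.2.1 := mul_le_mul_of_nonneg_left (le_of_lt hq1) hqD.1
      have hB : (0:ℝ) ≤ q.2.2 := hqD.2.2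
      have hkey : q.1 * (c / 2) ≤ φ p + 1 :=
        le_of_lt (lt_of_le_of_lt (hA.trans (le_add_of_nonneg_right hB)) hq2')
      have : q.1 ≤ (φ p + 1) / (c / 2) :=
        (le_div_iff₀ (by linarith : (0:ℝ) < c / 2)).mpr hkey
      exact this.trans (le_max_right _ _)
    have hIccmem : Set.Icc (0:ℝ) M ∈ G.map (fun q : ℝ × ((WeakDual ℝ X × ℝ) × ℝ) => q.1) :=
      Filter.mem_map.mpr hbound
    obtain ⟨lb, hlb, hlbt⟩ := (isCompact_Icc).ultrafilter_le_nhds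
      (G.map (fun q : ℝ × ((WeakDual ℝ X × ℝ) × ℝ) => q.1)) (Filter.le_principal_iff.mpr hIccmem)
    have hlt : Filter.Tendsto (fun q : ℝ × ((WeakDual ℝ X × ℝ) × ℝ) => q.1) G (nhds lb) := hlbt
    have hmeq : ∀ q : ℝ × ((WeakDual ℝ X × ℝ) × ℝ), q.2.2 = (Φ q).2 - q.1 * q.2.1.2 := by
      intro ⟨l, v, m⟩
      show m = (l * v.2 + m) - l * v.2
      ring
    set μ : ℝ := p.2 - lb * vb.2 with hμdef
    have hmt : Filter.Tendsto (fun q : ℝ × ((WeakDual ℝ X × ℝ) × ℝ) => q.2.2) G (nhds μ) := by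
      have h1 : Filter.Tendsto (fun q : ℝ × ((WeakDual ℝ X × ℝ) × ℝ) => (Φ q).2) G (nhds p.2) :=
        (continuous_snd.tendsto p).comp hGΦ
      have h2 : Filter.Tendsto (fun q : ℝ × ((WeakDual ℝ X × ℝ) × ℝ) => q.1 * q.2.1.2) G
          (nhds (lb * vb.2)) := hlt.mul ((continuous_snd.tendsto vb).comp hvt)
      exact (h1.sub h2).congr fun q => (hmeq q).symm
    have hμ0 : 0 ≤ μ := ge_of_tendsto hmt (hGD.mono fun q hq => hq.2.2)
    have hΦlim : Filter.Tendsto Φ G (nhds (lb • vb + ((0 : WeakDual ℝ X), μ))) :=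
      (hlt.smul hvt).add ((tendsto_const_nhds : Filter.Tendsto
        (fun _ : ℝ × ((WeakDual ℝ X × ℝ) × ℝ) => (0 : WeakDual ℝ X)) G _).prodMk_nhds hmt)
    have hpeq : p = lb • vb + ((0 : WeakDual ℝ X), μ) := tendsto_nhds_unique hGΦ hΦlim
    exact ⟨(lb, (vb, μ)), ⟨hlb.1, hvb, hμ0⟩, hpeq.symm⟩
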